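/- For 0 < λ < 1/2, the probability measure π_λ(dx) = M_λ e^{-x} sinh(√(1-2λ) x) dx on (0,∞) fails condition (iii): limsup_{x→∞} (1/x) ln π_λ([x,∞)) = −(1 − √(1-2λ)) > −1. In particular ∫ e^{ux} π_λ(dx) = ∞ for u ∈ (1 − √(1−2λ), 1). -/

import Mathlib

open MeasureTheory Real Filter Topology

lemma aux_int_exp {b : ℝ} (hb : 0 < b) (a : ℝ) :
    ∫ x in Set.Ioi a, Real.exp (-(b * x)) = Real.exp (-(b * a)) / b := by
  have hd : ∀ x ∈ Set.Ici a, HasDerivAt (fun x => -Real.exp (-(b * x)) / b)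
      (Real.exp (-(b * x))) x := by
    intro x _
    have h1 : HasDerivAt (fun x : ℝ => -(b * x)) (-b) x := by
      have h := ((hasDerivAt_id' x).const_mul b).neg
      simp only [mul_one] at h
      exact h
    have h2 := (h1.exp).neg.div_const b
    refine h2.congr_deriv ?_
    field_simp
  have hint : IntegrableOn (fun x => Real.exp (-(b * x))) (Set.Ioi a) := by
    simpa [neg_mul] using exp_neg_integrableOn_Ioi a hb
  have hlim : Tendsto (fun x => -Real.exp (-(b * x)) / b) atTop (𝓝 0) := by
    have h1 : Tendsto (fun x : ℝ => -b * x) atTop atBot :=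
      tendsto_id.const_mul_atTop_of_neg (by linarith)
    have h2 : Tendsto (fun x : ℝ => Real.exp (-(b * x))) atTop (𝓝 0) := by
      have := Real.tendsto_exp_atBot.comp h1
      simp only [Function.comp_def, neg_mul] at this
      simpa using this
    simpa using (h2.neg.div_const b)
  have := integral_Ioi_of_hasDerivAt_of_tendsto' hd hint hlim
  rw [this]; ring

/-- For `0 < λ < 1/2` and `β = √(1-2λ) ∈ (0,1)`, the QSD
`π_λ(dx) = M_λ e^{-x} sinh(βx) dx` (with `M_λ = (1-β²)/β` the normalising constant)
has tail decay rate `limsup (1/x) ln π_λ([x,∞)) = -(1-β) > -1`, and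
`∫ e^{ux} dπ_λ = ∞` for every `u ∈ (1-β, 1)`. -/
theorem stmt_2 (lam β M : ℝ) (h0 : 0 < lam) (h1 : lam < 1/2)
    (hβ : β = Real.sqrt (1 - 2 * lam)) (hM : M = (1 - β ^ 2) / β) :
    Filter.limsup
      (fun x => Real.log (∫ t in Set.Ici x, M * (Real.exp (-t) * Real.sinh (β * t))) / x)
      Filter.atTop = -(1 - β) ∧
    -(1 - β) > -1 ∧
    ∀ u : ℝ, 1 - β < u → u < 1 →
      ¬ IntegrableOn (fun x => Real.exp (u * x) * (M * (Real.exp (-x) * Real.sinh (β * x))))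
        (Set.Ioi 0) := by
  have hβpos : 0 < β := by
    rw [hβ]; exact Real.sqrt_pos.mpr (by linarith)
  have hβlt : β < 1 := by
    rw [hβ]
    have : (1 : ℝ) - 2 * lam < 1 := by linarith
    calc Real.sqrt (1 - 2*lam) < Real.sqrt 1 :=
          (Real.sqrt_lt_sqrt (by linarith) this)
      _ = 1 := Real.sqrt_one
  have h1m : 0 < 1 - β := by linarith
  have h1p : 0 < 1 + β := by linarith
  have hMpos : 0 < M := by
    rw [hM]
    apply div_pos _ hβpos
    nlinarith
  -- tail formula
  have hfun : ∀ t : ℝ, M * (Real.exp (-t) * Real.sinh (β * t))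
      = M / 2 * Real.exp (-((1 - β) * t)) - M / 2 * Real.exp (-((1 + β) * t)) := by
    intro t
    rw [show -((1 - β) * t) = -t + β * t by ring,
        show -((1 + β) * t) = -t + -(β * t) by ring,
        Real.exp_add, Real.exp_add, Real.sinh_eq]
    ring
  have key : ∀ x : ℝ, (∫ t in Set.Ici x, M * (Real.exp (-t) * Real.sinh (β * t)))
      = M / 2 * (Real.exp (-((1 - β) * x)) / (1 - β))
        - M / 2 * (Real.exp (-((1 + β) * x)) / (1 + β)) := by
    intro x
    rw [MeasureTheory.integral_Ici_eq_integral_Ioi]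
    simp_rw [hfun]
    have hint1 : IntegrableOn (fun t => Real.exp (-((1 - β) * t))) (Set.Ioi x) := by
      have h := exp_neg_integrableOn_Ioi x h1m
      simp only [neg_mul] at h; exact h
    have hint2 : IntegrableOn (fun t => Real.exp (-((1 + β) * t))) (Set.Ioi x) := by
      have h := exp_neg_integrableOn_Ioi x h1p
      simp only [neg_mul] at h; exact h
    rw [MeasureTheory.integral_sub (hint1.const_mul _) (hint2.const_mul _),
        MeasureTheory.integral_const_mul, MeasureTheory.integral_const_mul,
        aux_int_exp h1m, aux_int_exp h1p]
  set g : ℝ → ℝ := fun x => ((1 + β) - (1 - β) * Real.exp (-(2 * β * x))) / (2 * β) with hg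
  have hfact : ∀ x : ℝ, (∫ t in Set.Ici x, M * (Real.exp (-t) * Real.sinh (β * t)))
      = Real.exp (-((1 - β) * x)) * g x := by
    intro x
    rw [key x, hg]
    have he : Real.exp (-((1 + β) * x))
        = Real.exp (-((1 - β) * x)) * Real.exp (-(2 * β * x)) := by
      rw [← Real.exp_add]; ring_nf
    rw [he, hM]
    have h2 : (1 : ℝ) - β ^ 2 = (1 - β) * (1 + β) := by ring
    field_simp
    ring
  have hgpos : ∀ x : ℝ, 0 ≤ x → 0 < g x := by
    intro x hx
    apply div_pos _ (by linarith)
    have : Real.exp (-(2 * β * x)) ≤ 1 := by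
      rw [Real.exp_le_one_iff]
      nlinarith
    nlinarith [Real.exp_pos (-(2 * β * x))]
  -- limit of g
  have hglim : Tendsto g atTop (𝓝 ((1 + β) / (2 * β))) := by
    have h1 : Tendsto (fun x : ℝ => -(2 * β) * x) atTop atBot :=
      tendsto_id.const_mul_atTop_of_neg (by linarith)
    have h2 : Tendsto (fun x : ℝ => Real.exp (-(2 * β * x))) atTop (𝓝 0) := by
      have := Real.tendsto_exp_atBot.comp h1
      simp only [Function.comp_def, neg_mul] at this
      exact this
    have h3 : Tendsto (fun x : ℝ => ((1 + β) - (1 - β) * Real.exp (-(2 * β * x))) / (2 * β))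
        atTop (𝓝 (((1 + β) - (1 - β) * 0) / (2 * β))) :=
      (((tendsto_const_nhds : Tendsto (fun _ : ℝ => (1 + β)) atTop _).sub
        (h2.const_mul (1 - β))).div_const (2 * β))
    simpa using h3
  have hloglim : Tendsto (fun x => Real.log (g x) / x) atTop (𝓝 0) := by
    have h1 : Tendsto (fun x => Real.log (g x)) atTop (𝓝 (Real.log ((1 + β) / (2 * β)))) := by
      exact (Real.continuousAt_log (by positivity)).tendsto.comp hglim
    exact h1.div_atTop tendsto_id
  have hmain : Tendsto
      (fun x => Real.log (∫ t in Set.Ici x, M * (Real.exp (-t) * Real.sinh (β * t))) / x)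
      atTop (𝓝 (-(1 - β))) := by
    have heq : ∀ᶠ x in atTop,
        Real.log (∫ t in Set.Ici x, M * (Real.exp (-t) * Real.sinh (β * t))) / x
        = -(1 - β) + Real.log (g x) / x := by
      filter_upwards [eventually_gt_atTop (0 : ℝ)] with x hx
      rw [hfact x, Real.log_mul (Real.exp_ne_zero _) (ne_of_gt (hgpos x hx.le)),
          Real.log_exp]
      field_simp
    have h2 : Tendsto (fun x => -(1 - β) + Real.log (g x) / x) atTop (𝓝 (-(1 - β))) := by
      simpa using tendsto_const_nhds.add hloglim
    exact h2.congr' (by filter_upwards [heq] with x hx using hx.symm)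
  refine ⟨hmain.limsup_eq, by linarith, ?_⟩
  -- non-integrability
  intro u hu1 hu2 hint
  set ε : ℝ := u - 1 + β with hε
  have hεpos : 0 < ε := by simp [hε]; linarith
  set f : ℝ → ℝ := fun x => Real.exp (u * x) * (M * (Real.exp (-x) * Real.sinh (β * x)))
    with hf
  have hlb : ∀ x : ℝ, 0 ≤ x → M / 2 * (Real.exp (ε * x) - 1) ≤ f x := by
    intro x hx
    have : f x = M / 2 * (Real.exp (ε * x) - Real.exp ((u - 1 - β) * x)) := by
      rw [hf]
      simp only
      rw [Real.sinh_eq, show ε * x = u * x + (-x + β * x) by rw [hε]; ring,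
          show (u - 1 - β) * x = u * x + (-x + -(β * x)) by ring,
          Real.exp_add, Real.exp_add, Real.exp_add, Real.exp_add]
      ring
    rw [this]
    have h2 : Real.exp ((u - 1 - β) * x) ≤ 1 := by
      rw [Real.exp_le_one_iff]
      nlinarith
    nlinarith
  set x0 : ℝ := max 1 (Real.log 2 / ε) with hx0
  have hx0pos : (0 : ℝ) < x0 := lt_of_lt_of_le one_pos (le_max_left _ _)
  have hfge : ∀ x ∈ Set.Ioi x0, M / 2 ≤ f x := by
    intro x hx
    have hxx : x0 < x := hx
    have hxpos : 0 < x := lt_trans hx0pos hxx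
    have h2 : (2 : ℝ) ≤ Real.exp (ε * x) := by
      rw [show (2 : ℝ) = Real.exp (Real.log 2) by rw [Real.exp_log]; norm_num,
          Real.exp_le_exp]
      have : Real.log 2 / ε ≤ x := le_of_lt (lt_of_le_of_lt (le_max_right 1 _) hxx)
      calc Real.log 2 = ε * (Real.log 2 / ε) := by field_simp
        _ ≤ ε * x := by nlinarith
    have := hlb x hxpos.le
    nlinarith
  have hint2 : IntegrableOn f (Set.Ioi x0) :=
    hint.mono_set (Set.Ioi_subset_Ioi hx0pos.le)
  have hfin := hint2.hasFiniteIntegral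
  rw [MeasureTheory.hasFiniteIntegral_iff_norm] at hfin
  have hge : (ENNReal.ofReal (M / 2)) * volume (Set.Ioi x0)
      ≤ ∫⁻ a in Set.Ioi x0, ENNReal.ofReal ‖f a‖ := by
    rw [← MeasureTheory.setLIntegral_const]
    apply MeasureTheory.setLIntegral_mono' measurableSet_Ioi
    intro x hx
    exact ENNReal.ofReal_le_ofReal (le_trans (hfge x hx) (le_abs_self _))
  rw [Real.volume_Ioi, ENNReal.mul_top (by simp [hMpos.le]; positivity)] at hge
  exact (lt_irrefl _ (lt_of_le_of_lt hge hfin)).elim
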